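/- For λ ∈ (-1,1), the real vector space of 3×3 real symmetric matrices Θ satisfying H(λ)ᵀΘ = ΘH(λ) with the 3×3 discrete square-well Hamiltonian H(λ) has dimension exactly 3. -/
import Mathlib

open Matrix Polynomial

/-- The N×N discrete PT-symmetric square-well Hamiltonian (0-indexed). -/
noncomputable def Ham (N : ℕ) (l : ℝ) : Matrix (Fin N) (Fin N) ℝ :=
  Matrix.of fun i j =>
    if (i : ℕ) = j then 2
    else if (j : ℕ) = (i : ℕ) + 1 then
      (if (i : ℕ) = 0 then -1 - l else if (j : ℕ) = N - 1 then -1 + l else -1)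
    else if (i : ℕ) = (j : ℕ) + 1 then
      (if (j : ℕ) = 0 then -1 + l else if (i : ℕ) = N - 1 then -1 - l else -1)
    else 0

/-- The real vector space of symmetric solutions Θ of H(λ)ᵀ Θ = Θ H(λ). -/
noncomputable def solSpace (N : ℕ) (l : ℝ) : Submodule ℝ (Matrix (Fin N) (Fin N) ℝ) where
  carrier := {Θ | Θ.IsSymm ∧ (Ham N l)ᵀ * Θ = Θ * Ham N l}
  add_mem' := by
    rintro a b ⟨ha1, ha2⟩ ⟨hb1, hb2⟩
    refine ⟨?_, ?_⟩
    · show (a + b)ᵀ = a + b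
      rw [Matrix.transpose_add, ha1, hb1]
    · rw [Matrix.mul_add, Matrix.add_mul, ha2, hb2]
  zero_mem' := by
    refine ⟨?_, by simp⟩
    show (0 : Matrix (Fin N) (Fin N) ℝ)ᵀ = 0
    simp
  smul_mem' := by
    rintro c a ⟨ha1, ha2⟩
    refine ⟨?_, ?_⟩
    · show (c • a)ᵀ = c • a
      rw [Matrix.transpose_smul, ha1]
    · rw [Matrix.mul_smul, Matrix.smul_mul, ha2]

theorem stmt13 (l : ℝ) (hl : l ∈ Set.Ioo (-1 : ℝ) 1) :
    Module.finrank ℝ (solSpace 3 l) = 3 := by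
  obtain ⟨hl1, hl2⟩ := hl
  have hq : l - 1 ≠ 0 := by linarith
  have hq' : (1 : ℝ) - l ≠ 0 := by linarith
  let L : solSpace 3 l →ₗ[ℝ] (Fin 3 → ℝ) :=
    { toFun := fun Θ => ![Θ.1 0 0, Θ.1 0 1, Θ.1 0 2]
      map_add' := by
        intro a b; funext i; fin_cases i <;> simp [Matrix.add_apply]
      map_smul' := by
        intro c a; funext i; fin_cases i <;> simp [Matrix.smul_apply] }
  have hbij : Function.Bijective L := by
    constructor
    · rw [← LinearMap.ker_eq_bot, LinearMap.ker_eq_bot']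
      rintro ⟨Θ, hsym, heq⟩ h0
      have h00 : Θ 0 0 = 0 := congrFun h0 0
      have h01 : Θ 0 1 = 0 := congrFun h0 1
      have h02 : Θ 0 2 = 0 := congrFun h0 2
      have e01 := congrFun (congrFun heq 0) 1
      have e02 := congrFun (congrFun heq 0) 2
      have e12 := congrFun (congrFun heq 1) 2
      simp [Ham, Matrix.mul_apply, Fin.sum_univ_three] at e01 e02 e12
      have h11 : Θ 1 1 = 0 := by
        have : (l - 1) * Θ 1 1 = 0 := by nlinarith [e01]
        rcases mul_eq_zero.1 this with h | h
        · exact absurd h hq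
        · exact h
      have h12 : Θ 1 2 = 0 := by
        have : (l - 1) * Θ 1 2 = 0 := by nlinarith [e02]
        rcases mul_eq_zero.1 this with h | h
        · exact absurd h hq
        · exact h
      have h22 : Θ 2 2 = 0 := by
        have : (l + 1) * Θ 2 2 = 0 := by nlinarith [e12]
        rcases mul_eq_zero.1 this with h | h
        · exact absurd h (by linarith)
        · exact h
      have h10 : Θ 1 0 = 0 := by
        have := congrFun (congrFun hsym 0) 1
        simpa [Matrix.transpose_apply, h01] using this
      have h20 : Θ 2 0 = 0 := by
        have := congrFun (congrFun hsym 0) 2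
        simpa [Matrix.transpose_apply, h02] using this
      have h21 : Θ 2 1 = 0 := by
        have := congrFun (congrFun hsym 1) 2
        simpa [Matrix.transpose_apply, h12] using this
      apply Subtype.ext
      show Θ = 0
      ext i j
      fin_cases i <;> fin_cases j <;>
        simp [h00, h01, h02, h10, h11, h12, h20, h21, h22]
    · intro v
      set k : ℝ := (1 + l) / (1 - l) with hk
      set M : Matrix (Fin 3) (Fin 3) ℝ :=
        Matrix.of ![![v 0, v 1, v 2], ![v 1, k * (v 0 + v 2), v 1], ![v 2, v 1, v 0]] with hM
      have hmem : M ∈ solSpace 3 l := by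
        constructor
        · show Mᵀ = M
          ext i j
          fin_cases i <;> fin_cases j <;> simp [hM, Matrix.transpose_apply]
        · ext i j
          fin_cases i <;> fin_cases j <;>
            (rw [Matrix.mul_apply, Matrix.mul_apply, Fin.sum_univ_three, Fin.sum_univ_three] <;>
             (try simp [hM, hk, Ham]) <;> (try field_simp) <;> (try ring))
      refine ⟨⟨M, hmem⟩, ?_⟩
      funext i
      fin_cases i <;> simp [L, hM]
  rw [(LinearEquiv.ofBijective L hbij).finrank_eq]
  simp
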